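/- The branch homomorphism β : T → S is injective. Consequently the tree product on T is associative, and T with this product is a CQP monoid that is the initial object in the category of CQP monoids: for every CQP monoid N there is a unique CQP monoid homomorphism T → N. -/

import Mathlib

open scoped Pointwise

/-- Generators of the branch monoid `B`: π₁, π₂, their stars, and 0. -/
inductive Bgen : Type
  | pi : Fin 2 → Bgen
  | pis : Fin 2 → Bgen
  | zero : Bgen

/-- Defining relations of the branch monoid: `0·b = b·0 = 0` and `πᵢπⱼ* = δᵢⱼ`. -/
inductive Brel : FreeMonoid Bgen → FreeMonoid Bgen → Prop
  | zero_mul (x : FreeMonoid Bgen) :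
      Brel (FreeMonoid.of Bgen.zero * x) (FreeMonoid.of Bgen.zero)
  | mul_zero (x : FreeMonoid Bgen) :
      Brel (x * FreeMonoid.of Bgen.zero) (FreeMonoid.of Bgen.zero)
  | pi_pis_same (i : Fin 2) :
      Brel (FreeMonoid.of (Bgen.pi i) * FreeMonoid.of (Bgen.pis i)) 1
  | pi_pis_ne (i j : Fin 2) : i ≠ j →
      Brel (FreeMonoid.of (Bgen.pi i) * FreeMonoid.of (Bgen.pis j))
        (FreeMonoid.of Bgen.zero)

/-- The congruence generated by the defining relations. -/
def Bcon : Con (FreeMonoid Bgen) := conGen Brel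

/-- The branch monoid `B`. -/
abbrev Bmon : Type := Bcon.Quotient

/-- The absorbing element `0` of `B`. -/
def bz : Bmon := Bcon.mk' (FreeMonoid.of Bgen.zero)

/-- The image of πᵢ in `B`. -/
def bpi (i : Fin 2) : Bmon := Bcon.mk' (FreeMonoid.of (Bgen.pi i))

/-- The image of πᵢ* in `B`. -/
def bpis (i : Fin 2) : Bmon := Bcon.mk' (FreeMonoid.of (Bgen.pis i))

/-- The inclusion of the free monoid `F` on π₁, π₂ into `B`. -/
def ιF : FreeMonoid (Fin 2) →* Bmon :=
  Bcon.mk'.comp (FreeMonoid.map Bgen.pi)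

/-- The star `w*` of a word `w ∈ F`, as an element of `B`: reverse the word and
star each letter. -/
def bstar (w : FreeMonoid (Fin 2)) : Bmon :=
  Bcon.mk' (FreeMonoid.ofList (((FreeMonoid.toList w).reverse).map Bgen.pis))

theorem bz_mul (x : Bmon) : bz * x = bz := by
  induction x using Con.induction_on with
  | H x => exact Con.eq Bcon |>.2 (ConGen.Rel.of _ _ (Brel.zero_mul x))

theorem mul_bz (x : Bmon) : x * bz = bz := by
  induction x using Con.induction_on with
  | H x => exact Con.eq Bcon |>.2 (ConGen.Rel.of _ _ (Brel.mul_zero x))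

/-- The monoid `S` of subsets of `B` containing `0`, under elementwise
multiplication; the identity is `{0, 1}`. -/
def Smon : Type := {X : Set Bmon // bz ∈ X}

noncomputable instance : Monoid Smon where
  mul X Y := ⟨X.val * Y.val, ⟨bz, X.prop, bz, Y.prop, bz_mul bz⟩⟩
  one := ⟨{bz, 1}, Or.inl rfl⟩
  mul_assoc X Y Z := Subtype.ext (mul_assoc X.val Y.val Z.val)
  one_mul X := Subtype.ext <| by
    show ({bz, 1} : Set Bmon) * X.val = X.val
    rw [Set.insert_eq, Set.union_mul, Set.singleton_mul, Set.singleton_mul]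
    ext b
    constructor
    · rintro (⟨x, hx, rfl⟩ | ⟨x, hx, rfl⟩)
      · simpa [bz_mul] using X.prop
      · simpa [one_mul] using hx
    · intro hb
      exact Or.inr ⟨b, hb, one_mul b⟩
  mul_one X := Subtype.ext <| by
    show X.val * ({bz, 1} : Set Bmon) = X.val
    rw [Set.insert_eq, Set.mul_union, Set.mul_singleton, Set.mul_singleton]
    ext b
    constructor
    · rintro (⟨x, hx, rfl⟩ | ⟨x, hx, rfl⟩)
      · simpa [mul_bz] using X.prop
      · simpa [mul_one] using hx
    · intro hb
      exact Or.inr ⟨b, hb, mul_one b⟩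

theorem Smon_mul_val (X Y : Smon) : (X * Y).val = X.val * Y.val := rfl

theorem Smon_one_val : (1 : Smon).val = {bz, 1} := rfl

/-- The element `{0, πᵢ}` of `S`. -/
def sπ (i : Fin 2) : Smon := ⟨{bz, bpi i}, Or.inl rfl⟩

/-- The element `{0, πᵢ*}` of `S`. -/
def sπs (i : Fin 2) : Smon := ⟨{bz, bpis i}, Or.inl rfl⟩

/-- The CQP operation on `S`: `Σ(X, Y) = π₁* X ∪ π₂* Y`. -/
def SgS (X Y : Smon) : Smon :=
  ⟨({bz, bpis 0} : Set Bmon) * X.val ∪ ({bz, bpis 1} : Set Bmon) * Y.val,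
    Or.inl ⟨bz, Or.inl rfl, bz, X.prop, bz_mul bz⟩⟩

/-- The free magma `T` on the free monoid `F` on π₁, π₂: finite nonempty ordered
binary trees with leaves colored by elements of `F`. -/
inductive Tm : Type
  | leaf : FreeMonoid (Fin 2) → Tm
  | node : Tm → Tm → Tm

/-- The action of the generator πᵢ on `T`: it picks out the `i`-th subtree of a
node, and acts by left multiplication on (the color of) a single leaf. -/
def pact (i : Fin 2) : Tm → Tm
  | .leaf w => .leaf (FreeMonoid.of i * w)
  | .node A B => if i = 0 then A else B

/-- The left action of a word `w ∈ F` on `T`, applying the symbols of `w` one at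
a time from right to left. -/
def wact (w : FreeMonoid (Fin 2)) (A : Tm) : Tm :=
  (FreeMonoid.toList w).foldr pact A

/-- The product on `T`: `A * B` replaces each leaf of `A` of color `w` by `w • B`. -/
def tmul : Tm → Tm → Tm
  | .leaf w, B => wact w B
  | .node A₁ A₂, B => .node (tmul A₁ B) (tmul A₂ B)

/-- The identity of `T`: a single leaf colored by the empty word. -/
def tone : Tm := .leaf 1

/-- The list of leaves of a tree `A ∈ T`, in order, recorded as pairs
`(path, color)`: the path from the root to the leaf is described by the word
`path` read from right to left, and `color` is the color of the leaf. -/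
def tleaves : Tm → List (FreeMonoid (Fin 2) × FreeMonoid (Fin 2))
  | .leaf w => [(1, w)]
  | .node A B =>
      ((tleaves A).map fun pc => (pc.1 * FreeMonoid.of 0, pc.2)) ++
        ((tleaves B).map fun pc => (pc.1 * FreeMonoid.of 1, pc.2))

/-- A categorical quasiproduct structure on a monoid. -/
def IsCQP {M : Type*} [Monoid M] (Sg : M → M → M) (π₁ π₂ : M) : Prop :=
  (∀ a b, π₁ * Sg a b = a) ∧ (∀ a b, π₂ * Sg a b = b) ∧
    (∀ a b c, Sg (a * c) (b * c) = Sg a b * c)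

/-- The branch homomorphism `β : T → S`: the magma homomorphism sending a leaf
of color `w` to `{0, w}`. -/
noncomputable def βmap : Tm → Smon
  | .leaf w => ⟨{bz, ιF w}, Or.inl rfl⟩
  | .node A B => SgS (βmap A) (βmap B)


/-! ### Auxiliary development -/

/-- A concrete monoid of partial functions on lists, in which `B` will be
represented. Multiplication is Kleisli composition. -/
def Mrep : Type := List (Fin 2) → Option (List (Fin 2))

instance : Monoid Mrep where
  one := fun l => some l
  mul f g := fun l => (f l).bind g
  mul_assoc f g h := funext fun l => by
    show ((f l).bind g).bind h = (f l).bind fun a => (g a).bind h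
    cases f l <;> rfl
  one_mul f := funext fun _ => rfl
  mul_one f := funext fun l => by
    show (f l).bind (fun a => some a) = f l
    cases f l <;> rfl

lemma Mrep_mul_apply (f g : Mrep) (l : List (Fin 2)) : (f * g) l = (f l).bind g := rfl

/-- Representation of the generators. -/
def genRep : Bgen → Mrep
  | .pi i => fun l => some (i :: l)
  | .pis i => fun l => match l with
      | [] => none
      | j :: t => if j = i then some t else none
  | .zero => fun _ => none

def phi0 : FreeMonoid Bgen →* Mrep := FreeMonoid.lift genRep

lemma phi0_of (g : Bgen) : phi0 (FreeMonoid.of g) = genRep g :=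
  FreeMonoid.lift_eval_of _ _

lemma brel_ker : Bcon ≤ Con.ker phi0 := by
  apply Con.conGen_le.2
  intro x y h
  rw [Con.ker_rel]
  cases h with
  | zero_mul x =>
    rw [map_mul, phi0_of]
    funext l
    rfl
  | mul_zero x =>
    rw [map_mul, phi0_of]
    funext l
    show (phi0 x l).bind (genRep .zero) = none
    cases phi0 x l <;> rfl
  | pi_pis_same i =>
    rw [map_mul, phi0_of, phi0_of, map_one]
    funext l
    show (if i = i then some l else none) = some l
    simp
  | pi_pis_ne i j hij =>
    rw [map_mul, phi0_of, phi0_of, phi0_of]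
    funext l
    show (if i = j then some l else none) = none
    simp [hij]

/-- The representation `B →* Mrep`. -/
def phi : Bmon →* Mrep := Bcon.lift phi0 brel_ker

lemma phi_mk (x : FreeMonoid Bgen) : phi (Bcon.mk' x) = phi0 x :=
  Con.lift_mk' _ _

lemma phi_bz : phi bz = genRep .zero := by rw [bz, phi_mk, phi0_of]

lemma phi_bpi (i : Fin 2) : phi (bpi i) = genRep (.pi i) := by rw [bpi, phi_mk, phi0_of]

lemma phi_bpis (i : Fin 2) : phi (bpis i) = genRep (.pis i) := by rw [bpis, phi_mk, phi0_of]

lemma iF_of (i : Fin 2) : ιF (FreeMonoid.of i) = bpi i := by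
  show Bcon.mk' (FreeMonoid.map Bgen.pi (FreeMonoid.of i)) = bpi i
  rw [FreeMonoid.map_of]
  rfl

lemma phi_iF (w : FreeMonoid (Fin 2)) (l : List (Fin 2)) :
    phi (ιF w) l = some ((FreeMonoid.toList w).reverse ++ l) := by
  suffices h : ∀ (lw : List (Fin 2)) (l : List (Fin 2)),
      phi (ιF (FreeMonoid.ofList lw)) l = some (lw.reverse ++ l) by
    have := h (FreeMonoid.toList w) l
    rwa [FreeMonoid.ofList_toList] at this
  intro lw
  induction lw with
  | nil =>
    intro l
    show phi (ιF 1) l = some l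
    rw [map_one, map_one]
    rfl
  | cons i t ih =>
    intro l
    have h1 : FreeMonoid.ofList (i :: t) = FreeMonoid.of i * FreeMonoid.ofList t := rfl
    rw [h1, map_mul, map_mul, Mrep_mul_apply, iF_of, phi_bpi]
    show (phi (ιF (FreeMonoid.ofList t))) (i :: l) = _
    rw [ih (i :: l)]
    simp

lemma bpi_bpis_same (i : Fin 2) : bpi i * bpis i = 1 :=
  Con.eq Bcon |>.2 (ConGen.Rel.of _ _ (Brel.pi_pis_same i))

lemma bpi_bpis_ne (i j : Fin 2) (h : i ≠ j) : bpi i * bpis j = bz :=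
  Con.eq Bcon |>.2 (ConGen.Rel.of _ _ (Brel.pi_pis_ne i j h))

lemma beta_node (A B : Tm) : βmap (.node A B) = SgS (βmap A) (βmap B) := rfl

lemma SgS_val (X Y : Smon) : (SgS X Y).val =
    ({bz, bpis 0} : Set Bmon) * X.val ∪ ({bz, bpis 1} : Set Bmon) * Y.val := rfl

lemma proj_aux (i : Fin 2) (X Y : Smon) (Z : Smon)
    (hZ : Z = if i = 0 then X else Y) : sπ i * SgS X Y = Z := by
  apply Subtype.ext
  rw [Smon_mul_val, SgS_val]
  show ({bz, bpi i} : Set Bmon) * _ = Z.val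
  ext b
  constructor
  · intro hb
    rw [Set.mem_mul] at hb
    obtain ⟨a, ha, s, hs, rfl⟩ := hb
    simp only [Set.mem_insert_iff, Set.mem_singleton_iff] at ha
    rcases ha with rfl | rfl
    · rw [bz_mul]; exact Z.prop
    · rcases hs with hs | hs <;> rw [Set.mem_mul] at hs <;>
        obtain ⟨c, hc, x, hx, rfl⟩ := hs <;>
        simp only [Set.mem_insert_iff, Set.mem_singleton_iff] at hc <;>
        rcases hc with rfl | rfl
      · rw [← mul_assoc, mul_bz, bz_mul]; exact Z.prop
      · by_cases hi : i = 0
        · subst hi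
          rw [← mul_assoc, bpi_bpis_same, one_mul]
          simpa [hZ] using hx
        · rw [← mul_assoc, bpi_bpis_ne i 0 hi, bz_mul]; exact Z.prop
      · rw [← mul_assoc, mul_bz, bz_mul]; exact Z.prop
      · by_cases hi : i = 1
        · subst hi
          rw [← mul_assoc, bpi_bpis_same, one_mul]
          simpa [hZ] using hx
        · rw [← mul_assoc, bpi_bpis_ne i 1 hi, bz_mul]; exact Z.prop
  · intro hb
    rw [Set.mem_mul]
    by_cases hi : i = 0
    · subst hi
      refine ⟨bpi 0, Set.mem_insert_iff.2 (Or.inr rfl), bpis 0 * b,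
        Set.mem_union_left _ (Set.mul_mem_mul (Set.mem_insert_iff.2 (Or.inr rfl))
          (by simpa [hZ] using hb)), ?_⟩
      rw [← mul_assoc, bpi_bpis_same, one_mul]
    · have hi1 : i = 1 := by omega
      subst hi1
      refine ⟨bpi 1, Set.mem_insert_iff.2 (Or.inr rfl), bpis 1 * b,
        Set.mem_union_right _ (Set.mul_mem_mul (Set.mem_insert_iff.2 (Or.inr rfl))
          (by simpa [hZ] using hb)), ?_⟩
      rw [← mul_assoc, bpi_bpis_same, one_mul]


lemma proj0 (X Y : Smon) : sπ 0 * SgS X Y = X := proj_aux 0 X Y X (by simp)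

lemma proj1 (X Y : Smon) : sπ 1 * SgS X Y = Y := proj_aux 1 X Y Y (by simp)

lemma exists_nz (A : Tm) : ∃ b ∈ (βmap A).val, ∃ l r, phi b l = some r := by
  induction A with
  | leaf w =>
    refine ⟨ιF w, Set.mem_insert_iff.2 (Or.inr rfl), [], _, phi_iF w []⟩
  | node A B ihA ihB =>
    obtain ⟨b, hb, l, r, hphi⟩ := ihA
    refine ⟨bpis 0 * b, ?_, 0 :: l, r, ?_⟩
    · exact Set.mem_union_left _
        (Set.mul_mem_mul (Set.mem_insert_iff.2 (Or.inr rfl)) hb)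
    · rw [map_mul, Mrep_mul_apply, phi_bpis]
      show ((if (0 : Fin 2) = 0 then some l else none)).bind (phi b) = some r
      simp [hphi]
      exact hphi

lemma leaf_ne_node (w : FreeMonoid (Fin 2)) (A B : Tm) :
    βmap (.leaf w) ≠ βmap (.node A B) := by
  intro h
  obtain ⟨b, hb, l, r, hphi⟩ := exists_nz A
  have hy : bpis 0 * b ∈ (βmap (.node A B)).val :=
    Set.mem_union_left _
      (Set.mul_mem_mul (Set.mem_insert_iff.2 (Or.inr rfl)) hb)
  rw [← h] at hy
  have h0 : phi (bpis 0 * b) (0 :: l) = some r := by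
    rw [map_mul, Mrep_mul_apply, phi_bpis]
    show ((if (0 : Fin 2) = 0 then some l else none)).bind (phi b) = some r
    simp [hphi]
    exact hphi
  have h1 : phi (bpis 0 * b) [] = none := by
    rw [map_mul, Mrep_mul_apply, phi_bpis]
    rfl
  rcases hy with hy | hy
  · rw [hy, phi_bz] at h0
    exact Option.some_ne_none _ h0.symm
  · rw [Set.mem_singleton_iff] at hy
    rw [hy, phi_iF] at h1
    exact Option.some_ne_none _ h1

lemma beta_inj : Function.Injective βmap := by
  intro A
  induction A with
  | leaf w =>
    intro A' h
    cases A' with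
    | leaf w' =>
      have hv := congrArg Subtype.val h
      have hm : ιF w ∈ ({bz, ιF w'} : Set Bmon) := by
        rw [show ({bz, ιF w'} : Set Bmon) = (βmap (.leaf w')).val from rfl, ← h]
        exact Set.mem_insert_iff.2 (Or.inr rfl)
      have hne : ιF w ≠ bz := by
        intro he
        have h2 : phi (ιF w) [] = phi bz [] := by rw [he]
        rw [phi_iF, phi_bz] at h2
        exact Option.some_ne_none _ h2
      rcases hm with hm | hm
      · exact absurd hm hne
      · rw [Set.mem_singleton_iff] at hm
        have this : phi (ιF w) [] = phi (ιF w') [] := by rw [hm]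
        rw [phi_iF, phi_iF] at this
        simp only [Option.some.injEq, List.append_nil] at this
        have : FreeMonoid.toList w = FreeMonoid.toList w' :=
          List.reverse_injective this
        have := congrArg FreeMonoid.ofList this
        rw [FreeMonoid.ofList_toList, FreeMonoid.ofList_toList] at this
        rw [this]
    | node A' B' => exact absurd h (leaf_ne_node w A' B')
  | node A B ihA ihB =>
    intro A' h
    cases A' with
    | leaf w' => exact absurd h.symm (leaf_ne_node w' A B)
    | node A' B' =>
      have h0 : βmap A = βmap A' := by
        calc βmap A = sπ 0 * SgS (βmap A) (βmap B) := (proj0 _ _).symm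
          _ = sπ 0 * SgS (βmap A') (βmap B') := by
              rw [← beta_node, ← beta_node, h]
          _ = βmap A' := proj0 _ _
      have h1 : βmap B = βmap B' := by
        calc βmap B = sπ 1 * SgS (βmap A) (βmap B) := (proj1 _ _).symm
          _ = sπ 1 * SgS (βmap A') (βmap B') := by
              rw [← beta_node, ← beta_node, h]
          _ = βmap B' := proj1 _ _
      rw [ihA h0, ihB h1]

/-! ### Tree algebra lemmas -/

lemma foldr_leaf (l : List (Fin 2)) (v : FreeMonoid (Fin 2)) :
    l.foldr pact (Tm.leaf v) = .leaf (FreeMonoid.ofList l * v) := by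
  induction l with
  | nil => rfl
  | cons i t ih =>
    rw [List.foldr_cons, ih]
    show Tm.leaf (FreeMonoid.of i * (FreeMonoid.ofList t * v)) = _
    rw [← mul_assoc]
    rfl

lemma wact_leaf (w v : FreeMonoid (Fin 2)) : wact w (.leaf v) = .leaf (w * v) := by
  show (FreeMonoid.toList w).foldr pact (Tm.leaf v) = _
  rw [foldr_leaf, FreeMonoid.ofList_toList]

lemma one_tmul (A : Tm) : tmul tone A = A := rfl

lemma tmul_tone (A : Tm) : tmul A tone = A := by
  induction A with
  | leaf w =>
    show wact w (.leaf 1) = _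
    rw [wact_leaf, mul_one]
  | node A B ihA ihB =>
    show Tm.node (tmul A tone) (tmul B tone) = _
    rw [ihA, ihB]

lemma pact_tmul (i : Fin 2) (B C : Tm) : pact i (tmul B C) = tmul (pact i B) C := by
  cases B with
  | leaf v => rfl
  | node B1 B2 =>
    show pact i (Tm.node (tmul B1 C) (tmul B2 C)) = tmul (pact i (.node B1 B2)) C
    show (if i = 0 then tmul B1 C else tmul B2 C) =
      tmul (if i = 0 then B1 else B2) C
    split <;> rfl

lemma foldr_tmul (l : List (Fin 2)) (B C : Tm) :
    l.foldr pact (tmul B C) = tmul (l.foldr pact B) C := by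
  induction l with
  | nil => rfl
  | cons i t ih => rw [List.foldr_cons, List.foldr_cons, ih, pact_tmul]

lemma tmul_assoc (A B C : Tm) : tmul (tmul A B) C = tmul A (tmul B C) := by
  induction A with
  | leaf w => exact (foldr_tmul (FreeMonoid.toList w) B C).symm
  | node A1 A2 ih1 ih2 =>
    show Tm.node (tmul (tmul A1 B) C) (tmul (tmul A2 B) C) = _
    rw [ih1, ih2]
    rfl

/-! ### The universal map -/

def tf {N : Type} [Monoid N] (Sg : N → N → N) (p : Fin 2 → N) : Tm → N
  | .leaf w => FreeMonoid.lift p w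
  | .node A B => Sg (tf Sg p A) (tf Sg p B)

variable {N : Type} [Monoid N] {Sg : N → N → N} {p : Fin 2 → N}

lemma tf_pact (hq : IsCQP Sg (p 0) (p 1)) (i : Fin 2) (C : Tm) :
    tf Sg p (pact i C) = p i * tf Sg p C := by
  cases C with
  | leaf v =>
    show FreeMonoid.lift p (FreeMonoid.of i * v) = p i * FreeMonoid.lift p v
    rw [map_mul, FreeMonoid.lift_eval_of]
  | node C1 C2 =>
    show tf Sg p (if i = 0 then C1 else C2) = p i * Sg (tf Sg p C1) (tf Sg p C2)
    fin_cases i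
    · simp only [if_pos rfl]
      exact (hq.1 _ _).symm
    · rw [if_neg (by decide)]
      exact (hq.2.1 _ _).symm

lemma tf_foldr (hq : IsCQP Sg (p 0) (p 1)) (l : List (Fin 2)) (B : Tm) :
    tf Sg p (l.foldr pact B) = FreeMonoid.lift p (FreeMonoid.ofList l) * tf Sg p B := by
  induction l with
  | nil =>
    show tf Sg p B = FreeMonoid.lift p 1 * tf Sg p B
    rw [map_one, one_mul]
  | cons i t ih =>
    rw [List.foldr_cons, tf_pact hq, ih]
    rw [show FreeMonoid.ofList (i :: t) = FreeMonoid.of i * FreeMonoid.ofList t from rfl,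
      map_mul, FreeMonoid.lift_eval_of, mul_assoc]

lemma tf_tmul (hq : IsCQP Sg (p 0) (p 1)) (A B : Tm) :
    tf Sg p (tmul A B) = tf Sg p A * tf Sg p B := by
  induction A with
  | leaf w =>
    show tf Sg p ((FreeMonoid.toList w).foldr pact B) = FreeMonoid.lift p w * tf Sg p B
    rw [tf_foldr hq, FreeMonoid.ofList_toList]
  | node A1 A2 ih1 ih2 =>
    show Sg (tf Sg p (tmul A1 B)) (tf Sg p (tmul A2 B)) = Sg _ _ * tf Sg p B
    rw [ih1, ih2, hq.2.2]

/-- The branch homomorphism `β : T → S` is injective; consequently the tree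
product on `T` is associative, `(T, Σ, π₁, π₂)` is a CQP monoid (with
`Σ(A,B) = node A B`), and `T` is the initial CQP monoid: for every CQP monoid
`N` there is a unique CQP monoid homomorphism `T → N`. -/
theorem t_universal_cqp :
    Function.Injective βmap ∧
    (∀ A B C : Tm, tmul (tmul A B) C = tmul A (tmul B C)) ∧
    (∀ A : Tm, tmul tone A = A) ∧ (∀ A : Tm, tmul A tone = A) ∧
    (∀ A B : Tm, tmul (.leaf (FreeMonoid.of 0)) (.node A B) = A) ∧
    (∀ A B : Tm, tmul (.leaf (FreeMonoid.of 1)) (.node A B) = B) ∧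
    (∀ A B C : Tm, Tm.node (tmul A C) (tmul B C) = tmul (.node A B) C) ∧
    ∀ (N : Type) [Monoid N] (Sg : N → N → N) (p : Fin 2 → N),
      IsCQP Sg (p 0) (p 1) →
      ∃! f : Tm → N, f tone = 1 ∧ (∀ A B, f (tmul A B) = f A * f B) ∧
        (∀ i, f (.leaf (FreeMonoid.of i)) = p i) ∧
        (∀ A B, f (.node A B) = Sg (f A) (f B)) := by
  refine ⟨beta_inj, tmul_assoc, one_tmul, tmul_tone, fun A B => rfl, fun A B => rfl,
    fun A B C => rfl, ?_⟩
  intro N _ Sg p hq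
  refine ⟨tf Sg p, ⟨?_, tf_tmul hq, ?_, fun A B => rfl⟩, ?_⟩
  · show FreeMonoid.lift p 1 = 1
    exact map_one _
  · intro i
    show FreeMonoid.lift p (FreeMonoid.of i) = p i
    exact FreeMonoid.lift_eval_of _ _
  · rintro g ⟨h1, h2, h3, h4⟩
    funext A
    induction A with
    | leaf w =>
      show g (.leaf w) = FreeMonoid.lift p w
      suffices hh : ∀ l : List (Fin 2), g (.leaf (FreeMonoid.ofList l)) =
          FreeMonoid.lift p (FreeMonoid.ofList l) by
        have := hh (FreeMonoid.toList w)
        rwa [FreeMonoid.ofList_toList] at this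
      intro l
      induction l with
      | nil =>
        show g tone = FreeMonoid.lift p 1
        rw [map_one, h1]
      | cons i t ih =>
        have he : Tm.leaf (FreeMonoid.ofList (i :: t)) =
            tmul (.leaf (FreeMonoid.of i)) (.leaf (FreeMonoid.ofList t)) := by
          rw [show tmul (.leaf (FreeMonoid.of i)) (.leaf (FreeMonoid.ofList t)) =
            wact (FreeMonoid.of i) (.leaf (FreeMonoid.ofList t)) from rfl, wact_leaf]
          rfl
        rw [he, h2, h3, ih,
          show FreeMonoid.ofList (i :: t) = FreeMonoid.of i * FreeMonoid.ofList t from rfl,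
          map_mul, FreeMonoid.lift_eval_of]
    | node A B ihA ihB =>
      rw [h4, ihA, ihB]
      rfl
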